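/- The set F_49 contains an arithmetic progression of length 3; that is, there exist a ∈ ℝ and t > 0 such that a, a + t, and a + 2t all belong to F_49. -/

import Mathlib

/-- The Gauss map `x ↦ {1/x}`. -/
noncomputable def gaussMap (x : ℝ) : ℝ := Int.fract (1 / x)

/-- `Fset n` is the set of irrational numbers in `(0,1)` all of whose continued
fraction partial quotients are at most `n`. -/
noncomputable def Fset (n : ℕ) : Set ℝ :=
  {x | Irrational x ∧ x ∈ Set.Ioo (0 : ℝ) 1 ∧
    ∀ k : ℕ, ⌊1 / (gaussMap^[k] x)⌋ ≤ (n : ℤ)}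

lemma orbit2 {x y : ℝ} (hx : gaussMap x = y) (hy : gaussMap y = x) (k : ℕ) :
    gaussMap^[k] x = x ∨ gaussMap^[k] x = y := by
  induction k with
  | zero => left; rfl
  | succ n ih =>
    rw [Function.iterate_succ_apply']
    rcases ih with h | h
    · right; rw [h, hx]
    · left; rw [h, hy]

lemma mem_Fset_of_period2 {x y : ℝ} (hx : Irrational x)
    (hx0 : 0 < x) (hx1 : x < 1) (hy0 : 0 < y) (hy1 : y < 1)
    {m n : ℤ} (hm : m ≤ 49) (hn : n ≤ 49)
    (hxm : 1 / x = y + m) (hyn : 1 / y = x + n) : x ∈ Fset 49 := by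
  have hgx : gaussMap x = y := by
    rw [gaussMap, hxm, Int.fract_add_intCast, Int.fract_eq_self.2 ⟨hy0.le, hy1⟩]
  have hgy : gaussMap y = x := by
    rw [gaussMap, hyn, Int.fract_add_intCast, Int.fract_eq_self.2 ⟨hx0.le, hx1⟩]
  have hfx : ⌊1 / x⌋ = m := by
    rw [hxm, Int.floor_add_intCast, Int.floor_eq_zero_iff.2 ⟨hy0.le, hy1⟩, zero_add]
  have hfy : ⌊1 / y⌋ = n := by
    rw [hyn, Int.floor_add_intCast, Int.floor_eq_zero_iff.2 ⟨hx0.le, hx1⟩, zero_add]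
  refine ⟨hx, ⟨hx0, hx1⟩, fun k => ?_⟩
  rcases orbit2 hgx hgy k with h | h
  · rw [h, hfx]; exact_mod_cast hm
  · rw [h, hfy]; exact_mod_cast hn

theorem stmt5 :
    ∃ a t : ℝ, 0 < t ∧ a ∈ Fset 49 ∧ a + t ∈ Fset 49 ∧ a + 2 * t ∈ Fset 49 := by
  set s : ℝ := Real.sqrt 39 with hs
  have hs2 : s ^ 2 = 39 := Real.sq_sqrt (by norm_num)
  have hs0 : 0 ≤ s := Real.sqrt_nonneg 39
  have h6 : 6 < s := by nlinarith
  have h7 : s < 6.25 := by nlinarith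
  have hirr : Irrational s := by
    rw [hs, show (39 : ℝ) = ((39 : ℕ) : ℝ) by norm_num]
    refine irrational_sqrt_natCast_iff.2 ?_
    rintro ⟨r, hr⟩
    have hr39 : r ≤ 39 := by nlinarith
    interval_cases r <;> omega
  have hsub : Irrational (s - 6) := by simpa using hirr.sub_intCast 6
  refine ⟨(s - 6) / 12, (s - 6) / 12, by linarith, ?_, ?_, ?_⟩
  · exact mem_Fset_of_period2 (y := 4 * s - 24) (m := 48) (n := 1)
      (hsub.div_natCast (by norm_num)) (by linarith) (by nlinarith)
      (by nlinarith) (by nlinarith) (by norm_num) (by norm_num)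
      (by rw [div_eq_iff (by intro h; nlinarith [h] : ((s - 6) / 12 : ℝ) ≠ 0)]
          push_cast; linear_combination (-1/3 : ℝ) * hs2)
      (by rw [div_eq_iff (by nlinarith : (4 * s - 24 : ℝ) ≠ 0)]
          push_cast; linear_combination (-1/3 : ℝ) * hs2)
  · have h : (s - 6) / 12 + (s - 6) / 12 = (s - 6) / 6 := by ring
    rw [h]
    exact mem_Fset_of_period2 (y := 2 * s - 12) (m := 24) (n := 2)
      (hsub.div_natCast (by norm_num)) (by linarith) (by nlinarith)
      (by nlinarith) (by nlinarith) (by norm_num) (by norm_num)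
      (by rw [div_eq_iff (by intro h; nlinarith [h] : ((s - 6) / 6 : ℝ) ≠ 0)]
          push_cast; linear_combination (-1/3 : ℝ) * hs2)
      (by rw [div_eq_iff (by nlinarith : (2 * s - 12 : ℝ) ≠ 0)]
          push_cast; linear_combination (-1/3 : ℝ) * hs2)
  · have h : (s - 6) / 12 + 2 * ((s - 6) / 12) = (s - 6) / 4 := by ring
    rw [h]
    exact mem_Fset_of_period2 (y := (4 * s - 24) / 3) (m := 16) (n := 3)
      (hsub.div_natCast (by norm_num)) (by linarith) (by nlinarith)
      (by linarith) (by nlinarith) (by norm_num) (by norm_num)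
      (by rw [div_eq_iff (by intro h; nlinarith [h] : ((s - 6) / 4 : ℝ) ≠ 0)]
          push_cast; linear_combination (-1/3 : ℝ) * hs2)
      (by rw [div_eq_iff (by intro h; nlinarith [h] : ((4 * s - 24) / 3 : ℝ) ≠ 0)]
          push_cast; linear_combination (-1/3 : ℝ) * hs2)
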